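/- For every integer n ≥ 1 and every integer k, U_{n,k} − U_{n,k−1} = (n+1)³·λ_{n+1,k} − (34n³+51n²+27n+5)·λ_{n,k} + n³·λ_{n−1,k}, where λ_{n,k} = C(n,k)²·C(n+k,k)² for 0 ≤ k ≤ n and λ_{n,k} = 0 otherwise, and U_{n,k} = 4·(2n+1)·(k·(2k+1) − (2n+1)²)·λ_{n,k}. -/

import Mathlib

/-- `lam n k = C(n,k)² C(n+k,k)²` for `0 ≤ k ≤ n`, and `0` otherwise. -/
def lam (n k : ℤ) : ℤ :=
  if 0 ≤ k ∧ k ≤ n then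
    (n.toNat.choose k.toNat : ℤ) ^ 2 * ((n + k).toNat.choose k.toNat : ℤ) ^ 2
  else 0

/-- `U n k = 4 (2n+1) (k (2k+1) − (2n+1)²) λ_{n,k}`. -/
def Useq (n k : ℤ) : ℤ :=
  4 * (2 * n + 1) * (k * (2 * k + 1) - (2 * n + 1) ^ 2) * lam n k

lemma lam_zero {n k : ℤ} (h : ¬(0 ≤ k ∧ k ≤ n)) : lam n k = 0 := if_neg h

lemma lam_cast (n k : ℕ) :
    lam (n : ℤ) (k : ℤ) = (n.choose k : ℤ) ^ 2 * ((n + k).choose k : ℤ) ^ 2 := by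
  unfold lam
  split
  · have h1 : ((n:ℤ)).toNat = n := by omega
    have h2 : ((k:ℤ)).toNat = k := by omega
    have h3 : (((n:ℤ)) + (k:ℤ)).toNat = n + k := by omega
    rw [h1, h2, h3]
  · rename_i h
    have hk : n < k := by omega
    rw [Nat.choose_eq_zero_of_lt hk]
    ring

theorem U_telescope (n : ℤ) (hn : 1 ≤ n) (k : ℤ) :
    Useq n k - Useq n (k - 1)
      = (n + 1) ^ 3 * lam (n + 1) k
        - (34 * n ^ 3 + 51 * n ^ 2 + 27 * n + 5) * lam n k
        + n ^ 3 * lam (n - 1) k := by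
  obtain ⟨N, rfl⟩ : ∃ N : ℕ, n = (N : ℤ) := ⟨n.toNat, (Int.toNat_of_nonneg (by omega)).symm⟩
  have hN : 1 ≤ N := by exact_mod_cast hn
  rcases lt_or_ge k 0 with hk | hk
  · -- k < 0 : everything vanishes
    rw [lam_zero (by omega), lam_zero (by omega), lam_zero (by omega)]
    simp [Useq, lam_zero (show ¬((0:ℤ) ≤ k ∧ k ≤ (N:ℤ)) by omega),
      lam_zero (show ¬((0:ℤ) ≤ k - 1 ∧ k - 1 ≤ (N:ℤ)) by omega)]
  obtain ⟨K, rfl⟩ : ∃ K : ℕ, k = (K : ℤ) := ⟨k.toNat, (Int.toNat_of_nonneg hk).symm⟩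
  have hN1 : ((N:ℤ) - 1) = ((N - 1 : ℕ) : ℤ) := by omega
  have hNp1 : ((N:ℤ) + 1) = ((N + 1 : ℕ) : ℤ) := by push_cast; ring
  rcases Nat.eq_zero_or_pos K with rfl | hK1
  · -- k = 0
    have hz : lam (N:ℤ) (((0:ℕ):ℤ) - 1) = 0 := lam_zero (by omega)
    rw [Useq, Useq, hz, hNp1, hN1, lam_cast, lam_cast, lam_cast]
    simp [Nat.choose_zero_right]
    ring
  rcases lt_or_ge (N + 1) K with hKbig | hKle
  · -- k > n + 1 : everything vanishes
    rw [lam_zero (by omega), lam_zero (by omega), lam_zero (by omega)]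
    simp [Useq, lam_zero (show ¬((0:ℤ) ≤ (K:ℤ) ∧ (K:ℤ) ≤ (N:ℤ)) by omega),
      lam_zero (show ¬((0:ℤ) ≤ (K:ℤ) - 1 ∧ (K:ℤ) - 1 ≤ (N:ℤ)) by omega)]
  rcases eq_or_lt_of_le hKle with hKeq | hKlt
  · -- k = n + 1
    subst hKeq
    have hz1 : lam (N:ℤ) ((N+1:ℕ):ℤ) = 0 := lam_zero (by omega)
    have hz2 : lam ((N:ℤ) - 1) ((N+1:ℕ):ℤ) = 0 := lam_zero (by omega)
    have hz3 : lam ((N:ℤ) + 1) ((N+1:ℕ):ℤ) = lam ((N+1:ℕ):ℤ) ((N+1:ℕ):ℤ) := by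
      rw [hNp1]
    rw [Useq, Useq, hz1, hz2, hz3, lam_cast,
      show (((N+1:ℕ)):ℤ) - 1 = ((N : ℕ) : ℤ) by push_cast; ring, lam_cast]
    have key : ((N:ℤ) + 1) * (((N+1) + (N+1)).choose (N+1) : ℤ)
        = 2 * (2 * N + 1) * (((N + N).choose N : ℤ)) := by
      have h := Nat.succ_mul_centralBinom_succ N
      rw [Nat.centralBinom, Nat.centralBinom] at h
      have h1 : 2 * (N + 1) = (N + 1) + (N + 1) := by ring
      have h2 : 2 * N = N + N := by ring
      rw [h1, h2] at h
      have h' := congrArg (fun m : ℕ => (m : ℤ)) h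
      push_cast at h'
      linear_combination h'
    set x : ℤ := (((N+1) + (N+1)).choose (N+1) : ℤ)
    set y : ℤ := ((N + N).choose N : ℤ)
    simp only [Nat.choose_self, Nat.cast_one]
    push_cast
    linear_combination (-((N:ℤ)+1) * (((N:ℤ)+1) * x + 2 * (2 * (N:ℤ) + 1) * y)) * key
  · -- main case : 1 ≤ K ≤ N
    have hKN : K ≤ N := by omega
    have hkm : ((K:ℕ):ℤ) - 1 = ((K - 1 : ℕ) : ℤ) := by omega
    rw [Useq, Useq, hkm, hNp1, hN1, lam_cast, lam_cast, lam_cast, lam_cast]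
    set n : ℤ := (N : ℤ) with hn'
    set k : ℤ := (K : ℤ) with hk'
    set A : ℤ := (N.choose K : ℤ) with hA
    set B : ℤ := ((N + K).choose K : ℤ) with hB
    set A1 : ℤ := (N.choose (K-1) : ℤ) with hA1
    set B1 : ℤ := ((N + (K-1)).choose (K-1) : ℤ) with hB1
    set A2 : ℤ := ((N+1).choose K : ℤ) with hA2
    set B2 : ℤ := ((N+1+K).choose K : ℤ) with hB2
    set A3 : ℤ := ((N-1).choose K : ℤ) with hA3
    set B3 : ℤ := ((N-1+K).choose K : ℤ) with hB3
    have r1 : A * k = A1 * (n + 1 - k) := by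
      have h := Nat.choose_succ_right_eq N (K-1)
      rw [show K - 1 + 1 = K by omega, show N - (K-1) = N + 1 - K by omega] at h
      have := congrArg (fun m : ℕ => (m : ℤ)) h
      push_cast [Nat.cast_sub (show K ≤ N + 1 by omega)] at this
      linarith [this]
    have r2 : B * k = B1 * (n + k) := by
      have h := Nat.add_one_mul_choose_eq (N + K - 1) (K - 1)
      rw [show N + K - 1 + 1 = N + K by omega, show K - 1 + 1 = K by omega,
        show N + K - 1 = N + (K - 1) by omega] at h
      have := congrArg (fun m : ℕ => (m : ℤ)) h
      push_cast at this
      linarith [this]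
    have r3 : A * (n + 1) = A2 * (n + 1 - k) := by
      have h := Nat.choose_mul_succ_eq N K
      rw [show N + 1 - K = N + 1 - K from rfl] at h
      have := congrArg (fun m : ℕ => (m : ℤ)) h
      push_cast [Nat.cast_sub (show K ≤ N + 1 by omega)] at this
      linarith [this]
    have r4 : B * (n + k + 1) = B2 * (n + 1) := by
      have h := Nat.choose_mul_succ_eq (N + K) K
      rw [show N + K + 1 = N + 1 + K by ring, show N + 1 + K - K = N + 1 by omega] at h
      have := congrArg (fun m : ℕ => (m : ℤ)) h
      push_cast at this
      linarith [this]
    have r5 : A3 * n = A * (n - k) := by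
      have h := Nat.choose_mul_succ_eq (N - 1) K
      rw [show N - 1 + 1 = N by omega] at h
      have := congrArg (fun m : ℕ => (m : ℤ)) h
      push_cast [Nat.cast_sub (show K ≤ N by omega)] at this
      linarith [this]
    have r6 : B3 * (n + k) = B * n := by
      have h := Nat.choose_mul_succ_eq (N - 1 + K) K
      rw [show N - 1 + K + 1 = N + K by omega, show N + K - K = N by omega] at h
      have := congrArg (fun m : ℕ => (m : ℤ)) h
      push_cast at this
      linarith [this]
    have e1 : A1^2 * B1^2 * ((n+1-k)*(n+k))^2 = A^2 * B^2 * k^4 := by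
      calc A1^2 * B1^2 * ((n+1-k)*(n+k))^2
          = (A1 * (n+1-k))^2 * (B1 * (n+k))^2 := by ring
        _ = (A * k)^2 * (B * k)^2 := by rw [← r1, ← r2]
        _ = A^2 * B^2 * k^4 := by ring
    have e2 : A2^2 * B2^2 * ((n+1-k)*(n+1))^2 = A^2 * B^2 * (n+1)^2 * (n+k+1)^2 := by
      calc A2^2 * B2^2 * ((n+1-k)*(n+1))^2
          = (A2 * (n+1-k))^2 * (B2 * (n+1))^2 := by ring
        _ = (A * (n+1))^2 * (B * (n+k+1))^2 := by rw [← r3, ← r4]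
        _ = A^2 * B^2 * (n+1)^2 * (n+k+1)^2 := by ring
    have e3 : A3^2 * B3^2 * (n*(n+k))^2 = A^2 * B^2 * (n-k)^2 * n^2 := by
      calc A3^2 * B3^2 * (n*(n+k))^2
          = (A3 * n)^2 * (B3 * (n+k))^2 := by ring
        _ = (A * (n-k))^2 * (B * n)^2 := by rw [r5, r6]
        _ = A^2 * B^2 * (n-k)^2 * n^2 := by ring
    have hki : (1:ℤ) ≤ k := by rw [hk']; exact_mod_cast hK1
    have hkn : k ≤ n := by rw [hk', hn']; exact_mod_cast hKN
    have hni : (1:ℤ) ≤ n := by rw [hn']; exact_mod_cast hN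
    have hc : ((n+1-k)*(n+k)*n*(n+1) : ℤ) ≠ 0 := by
      apply mul_ne_zero
      apply mul_ne_zero
      apply mul_ne_zero
      all_goals omega
    rw [← hkm, ← hNp1]
    apply mul_left_cancel₀ (pow_ne_zero 2 hc)
    linear_combination
      (-4*(2*n+1)*((k-1)*(2*k-1)-(2*n+1)^2)*(n*(n+1))^2) * e1
      + (-(n+1)^3*((n+k)*n)^2) * e2
      + (-n^3*((n+1-k)*(n+1))^2) * e3
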